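/- Given 2×2 rational matrices M₁ and M₂ and a positive integer D such that the columns of the stacked 4×2 matrix [M₁; M₂] have squared norms ≤ D² and are orthogonal to each other, there exist finitely many additional 2×2 rational matrices M₃,…,M_k such that (1/D)·[M₁; M₂; …; M_k] has orthonormal columns (i.e., {Mⱼ/D} forms a superoperator). -/
import Mathlib


open Matrix

lemma rat_sum_four_squares (r : ℚ) (hr : 0 ≤ r) :
    ∃ x1 x2 x3 x4 : ℚ, x1 ^ 2 + x2 ^ 2 + x3 ^ 2 + x4 ^ 2 = r := by
  obtain ⟨a, b, c, d, h⟩ := Nat.sum_four_squares (r.num.toNat * r.den)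
  have hd : (r.den : ℚ) ≠ 0 := by exact_mod_cast r.den_nz
  refine ⟨a / r.den, b / r.den, c / r.den, d / r.den, ?_⟩
  have hnat : (a : ℚ) ^ 2 + b ^ 2 + c ^ 2 + d ^ 2 = (r.num.toNat : ℚ) * r.den := by
    exact_mod_cast h
  have hnum : (r.num.toNat : ℚ) = r.num := by
    have : (0:ℤ) ≤ r.num := Rat.num_nonneg.mpr hr
    exact_mod_cast Int.toNat_of_nonneg this
  have hr' : (r.num : ℚ) / r.den = r := by exact_mod_cast Rat.num_div_den r
  have key : ((a:ℚ) / r.den) ^ 2 + ((b:ℚ) / r.den) ^ 2 + ((c:ℚ) / r.den) ^ 2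
      + ((d:ℚ) / r.den) ^ 2 = ((a:ℚ)^2 + b^2 + c^2 + d^2) / (r.den * r.den) := by
    ring
  rw [key, hnat, hnum, mul_div_mul_right _ _ hd, hr']

theorem stmt18 (M₁ M₂ : Matrix (Fin 2) (Fin 2) ℚ) (D : ℕ) (hD : 0 < D)
    (horth : (M₁ᵀ * M₁ + M₂ᵀ * M₂) 0 1 = 0 ∧ (M₁ᵀ * M₁ + M₂ᵀ * M₂) 1 0 = 0)
    (hnorm : (M₁ᵀ * M₁ + M₂ᵀ * M₂) 0 0 ≤ (D : ℚ) ^ 2 ∧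
             (M₁ᵀ * M₁ + M₂ᵀ * M₂) 1 1 ≤ (D : ℚ) ^ 2) :
    ∃ (k : ℕ) (M : Fin k → Matrix (Fin 2) (Fin 2) ℚ),
      M₁ᵀ * M₁ + M₂ᵀ * M₂ + ∑ j, (M j)ᵀ * M j =
        ((D : ℚ) ^ 2) • (1 : Matrix (Fin 2) (Fin 2) ℚ) := by
  set S := M₁ᵀ * M₁ + M₂ᵀ * M₂ with hS
  obtain ⟨x1, x2, x3, x4, hx⟩ := rat_sum_four_squares ((D : ℚ) ^ 2 - S 0 0)
    (by linarith [hnorm.1])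
  obtain ⟨y1, y2, y3, y4, hy⟩ := rat_sum_four_squares ((D : ℚ) ^ 2 - S 1 1)
    (by linarith [hnorm.2])
  refine ⟨8, ![!![x1,0;0,0], !![x2,0;0,0], !![x3,0;0,0], !![x4,0;0,0],
              !![0,y1;0,0], !![0,y2;0,0], !![0,y3;0,0], !![0,y4;0,0]], ?_⟩
  ext i j
  fin_cases i <;> fin_cases j <;>
    simp [Fin.sum_univ_succ, Matrix.mul_apply, Matrix.one_apply, Fin.sum_univ_two,
      horth.1, horth.2] <;>
    ring_nf <;> ring_nf at hx hy <;> linarith [hx, hy]
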